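/- arXiv:2407.01079 — 8 statements merged into one kernel-verified Lean document; each statement's English description precedes it below -/
import Mathlib

section
/- Let B ∈ ℝ^{D×d₀} have orthonormal columns (BᵀB = I_{d₀}). Let p_h : ℝ^{d₀} → (0,∞) be a twice continuously differentiable probability density for which there exist constants A₀, A₁, A₂ > 0 such that p_h(h) ≤ (2π)^{-d₀/2} A₁ exp(−A₂‖h‖₂²/2) whenever ‖h‖₂ ≥ A₀. For t > 0 set β(t) = e^{-t/2} and σ(t) = 1 − e^{-t}, and for m ∈ ℕ let ψ_t^{(m)}(y | z) = (2πσ(t))^{-m/2} exp(−‖β(t)z − y‖₂²/(2σ(t))). Define p_t(x̄) = ∫_{ℝ^{d₀}} ψ_t^{(D)}(x̄ | Bh) p_h(h) dh for x̄ ∈ ℝ^D, and p_t^h(h̄) = ∫_{ℝ^{d₀}} ψ_t^{(d₀)}(h̄ | h) p_h(h) dh for h̄ ∈ ℝ^{d₀}. Then for every t > 0 and every x̄ ∈ ℝ^D, the score decomposes as ∇_{x̄} log p_t(x̄) = B ∇ log p_t^h(Bᵀx̄) − (1/σ(t)) (I_D − BBᵀ) x̄. -/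
open Matrix MeasureTheory RealInnerProductSpace

/-- The Gaussian transition kernel `ψ_t(y | z)` of the forward diffusion,
with `β(t) = e^{-t/2}` and `σ(t) = 1 - e^{-t}`. -/
noncomputable def gaussKernel (m : ℕ) (t : ℝ) (z y : EuclideanSpace ℝ (Fin m)) : ℝ :=
  (2 * Real.pi * (1 - Real.exp (-t))) ^ (-(m : ℝ) / 2) *
    Real.exp (-‖Real.exp (-t / 2) • z - y‖ ^ 2 / (2 * (1 - Real.exp (-t))))

section Aux
variable {D d₀ : ℕ}

lemma toEL_mul (M : Matrix (Fin D) (Fin d₀) ℝ) (N : Matrix (Fin d₀) (Fin D) ℝ) (v : EuclideanSpace ℝ (Fin D)) :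
    Matrix.toEuclideanLin (M * N) v = Matrix.toEuclideanLin M (Matrix.toEuclideanLin N v) := by
  simp [Matrix.toEuclideanLin_apply, Matrix.mulVec_mulVec]

lemma inner_toEL (B : Matrix (Fin D) (Fin d₀) ℝ) (u : EuclideanSpace ℝ (Fin d₀)) (v : EuclideanSpace ℝ (Fin D)) :
    ⟪Matrix.toEuclideanLin B u, v⟫ = ⟪u, Matrix.toEuclideanLin Bᵀ v⟫ := by
  have : Bᵀ = Bᴴ := by ext i j; simp [Matrix.conjTranspose]
  rw [this, Matrix.toEuclideanLin_conjTranspose_eq_adjoint, LinearMap.adjoint_inner_right]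

lemma LtL (B : Matrix (Fin D) (Fin d₀) ℝ) (hB : Bᵀ * B = 1) (u : EuclideanSpace ℝ (Fin d₀)) :
    Matrix.toEuclideanLin Bᵀ (Matrix.toEuclideanLin B u) = u := by
  rw [← toEL_mul, hB]
  simp [Matrix.toEuclideanLin_apply]

lemma norm_split (B : Matrix (Fin D) (Fin d₀) ℝ) (hB : Bᵀ * B = 1)
    (c : EuclideanSpace ℝ (Fin d₀)) (y : EuclideanSpace ℝ (Fin D)) :
    ‖Matrix.toEuclideanLin B c - y‖ ^ 2
      = ‖c - Matrix.toEuclideanLin Bᵀ y‖ ^ 2 + ‖y - Matrix.toEuclideanLin B (Matrix.toEuclideanLin Bᵀ y)‖ ^ 2 := by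
  set L := Matrix.toEuclideanLin B
  set Lt := Matrix.toEuclideanLin Bᵀ
  have habe : L c - y = L (c - Lt y) - (y - L (Lt y)) := by
    simp only [map_sub, L, Lt]; abel
  have horth : ⟪L (c - Lt y), y - L (Lt y)⟫ = 0 := by
    rw [inner_toEL]
    have : Matrix.toEuclideanLin Bᵀ (y - L (Lt y)) = 0 := by
      simp only [map_sub, LtL B hB]
      simp [Lt, L, LtL B hB]
    rw [this, inner_zero_right]
  have hnorm : ‖L (c - Lt y)‖ ^ 2 = ‖c - Lt y‖ ^ 2 := by
    rw [← real_inner_self_eq_norm_sq, ← real_inner_self_eq_norm_sq, inner_toEL, LtL B hB]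
  rw [habe, norm_sub_sq_real, horth, hnorm]
  ring

lemma sigma_pos {t : ℝ} (ht : 0 < t) : 0 < 1 - Real.exp (-t) := by
  have := Real.exp_lt_one_iff.mpr (neg_lt_zero.mpr ht)
  linarith

lemma gaussKernel_factor (B : Matrix (Fin D) (Fin d₀) ℝ) (hB : Bᵀ * B = 1)
    {t : ℝ} (ht : 0 < t) (h : EuclideanSpace ℝ (Fin d₀)) (y : EuclideanSpace ℝ (Fin D)) :
    gaussKernel D t (Matrix.toEuclideanLin B h) y
      = ((2 * Real.pi * (1 - Real.exp (-t))) ^ (-((D : ℝ) - d₀) / 2) *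
          Real.exp (-‖y - Matrix.toEuclideanLin (B * Bᵀ) y‖ ^ 2 / (2 * (1 - Real.exp (-t))))) *
        gaussKernel d₀ t h (Matrix.toEuclideanLin Bᵀ y) := by
  have hσ : 0 < 1 - Real.exp (-t) := sigma_pos ht
  have hbase : 0 < 2 * Real.pi * (1 - Real.exp (-t)) := by positivity
  have hsmul : Real.exp (-t/2) • Matrix.toEuclideanLin B h
      = Matrix.toEuclideanLin B (Real.exp (-t/2) • h) := (_root_.map_smul _ _ _).symm
  have hns := norm_split B hB (Real.exp (-t/2) • h) y
  have hpow : (2 * Real.pi * (1 - Real.exp (-t))) ^ (-(D : ℝ) / 2)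
      = (2 * Real.pi * (1 - Real.exp (-t))) ^ (-((D : ℝ) - d₀) / 2) *
        (2 * Real.pi * (1 - Real.exp (-t))) ^ (-(d₀ : ℝ) / 2) := by
    rw [← Real.rpow_add hbase]; ring_nf
  unfold gaussKernel
  rw [hsmul, hns, toEL_mul, hpow]
  rw [show -(‖Real.exp (-t/2) • h - Matrix.toEuclideanLin Bᵀ y‖ ^ 2 +
      ‖y - Matrix.toEuclideanLin B (Matrix.toEuclideanLin Bᵀ y)‖ ^ 2) / (2 * (1 - Real.exp (-t)))
      = -‖y - Matrix.toEuclideanLin B (Matrix.toEuclideanLin Bᵀ y)‖ ^ 2 / (2 * (1 - Real.exp (-t)))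
        + -‖Real.exp (-t/2) • h - Matrix.toEuclideanLin Bᵀ y‖ ^ 2 / (2 * (1 - Real.exp (-t))) by ring]
  rw [Real.exp_add]
  ring

lemma hasFDerivAt_gaussKernel {d : ℕ} {t : ℝ} (ht : 0 < t) (h z : EuclideanSpace ℝ (Fin d)) :
    HasFDerivAt (fun w => gaussKernel d t h w)
      ((gaussKernel d t h z / (1 - Real.exp (-t))) •
        (innerSL ℝ (Real.exp (-t/2) • h - z))) z := by
  have hσ : 0 < 1 - Real.exp (-t) := sigma_pos ht
  set σ := 1 - Real.exp (-t) with hσdef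
  set c := Real.exp (-t/2) • h with hc
  have hg : HasFDerivAt (fun w : EuclideanSpace ℝ (Fin d) => c - w)
      (-(ContinuousLinearMap.id ℝ _)) z := by
    exact (hasFDerivAt_id (𝕜 := ℝ) z).const_sub c
  have hf := HasFDerivAt.inner ℝ hg hg
  have hq : HasFDerivAt (fun w : EuclideanSpace ℝ (Fin d) => -‖c - w‖^2/(2*σ))
      ((1/σ) • innerSL ℝ (c - z)) z := by
    have heq : (fun w : EuclideanSpace ℝ (Fin d) => -‖c - w‖^2/(2*σ))
        = fun w => (-(1:ℝ)/(2*σ)) * ⟪c - w, c - w⟫ := by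
      funext w
      rw [real_inner_self_eq_norm_sq]
      ring
    rw [heq]
    have := hf.const_mul (-(1:ℝ)/(2*σ))
    refine this.congr_fderiv ?_
    ext v
    simp only [ContinuousLinearMap.smul_apply, innerSL_apply_apply, ContinuousLinearMap.coe_comp',
      Function.comp_apply, ContinuousLinearMap.prod_apply, fderivInnerCLM_apply,
      ContinuousLinearMap.neg_apply, ContinuousLinearMap.coe_id', id_eq,
      ContinuousLinearMap.coe_smul', Pi.smul_apply, smul_eq_mul,
      inner_neg_right, inner_neg_left, real_inner_comm (c - z) v]
    field_simp
    ring
  have hK := (hq.exp).const_mul ((2 * Real.pi * σ) ^ (-(d : ℝ) / 2))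
  have heqK : (fun w : EuclideanSpace ℝ (Fin d) => gaussKernel d t h w)
      = fun w => (2 * Real.pi * σ) ^ (-(d : ℝ) / 2) * Real.exp (-‖c - w‖^2/(2*σ)) := by
    funext w; rfl
  rw [heqK]
  refine hK.congr_fderiv ?_
  ext v
  simp only [ContinuousLinearMap.smul_apply, innerSL_apply_apply, smul_eq_mul, gaussKernel]
  ring

lemma gaussKernel_pos {d : ℕ} {t : ℝ} (ht : 0 < t) (h z : EuclideanSpace ℝ (Fin d)) :
    0 < gaussKernel d t h z := by
  have hσ : 0 < 1 - Real.exp (-t) := sigma_pos ht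
  have hbase : 0 < 2 * Real.pi * (1 - Real.exp (-t)) := by positivity
  exact mul_pos (Real.rpow_pos_of_pos hbase _) (Real.exp_pos _)

lemma gaussKernel_le {d : ℕ} {t : ℝ} (ht : 0 < t) (h z : EuclideanSpace ℝ (Fin d)) :
    gaussKernel d t h z ≤ (2 * Real.pi * (1 - Real.exp (-t))) ^ (-(d : ℝ) / 2) := by
  have hσ : 0 < 1 - Real.exp (-t) := sigma_pos ht
  have hbase : 0 < 2 * Real.pi * (1 - Real.exp (-t)) := by positivity
  have : Real.exp (-‖Real.exp (-t / 2) • h - z‖ ^ 2 / (2 * (1 - Real.exp (-t)))) ≤ 1 := by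
    rw [Real.exp_le_one_iff]
    have : (0:ℝ) ≤ ‖Real.exp (-t / 2) • h - z‖ ^ 2 := by positivity
    have h2 : 0 < 2 * (1 - Real.exp (-t)) := by linarith
    exact div_nonpos_of_nonpos_of_nonneg (by linarith) h2.le
  calc gaussKernel d t h z ≤ (2 * Real.pi * (1 - Real.exp (-t))) ^ (-(d : ℝ) / 2) * 1 :=
        mul_le_mul_of_nonneg_left this (Real.rpow_pos_of_pos hbase _).le
    _ = _ := mul_one _

lemma continuous_gaussKernel_fst {d : ℕ} (t : ℝ) (z : EuclideanSpace ℝ (Fin d)) :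
    Continuous (fun h => gaussKernel d t h z) := by
  unfold gaussKernel
  fun_prop

lemma r_exp_bound {σ : ℝ} (hσ : 0 < σ) (r : ℝ) (hr : 0 ≤ r) :
    r * Real.exp (-r ^ 2 / (2 * σ)) ≤ Real.sqrt (2 * σ) := by
  have h2σ : 0 < 2 * σ := by linarith
  have hs : 0 < Real.sqrt (2 * σ) := Real.sqrt_pos.mpr h2σ
  rcases le_or_gt r (Real.sqrt (2 * σ)) with hle | hgt
  · calc r * Real.exp (-r ^ 2 / (2 * σ)) ≤ r * 1 := by
          apply mul_le_mul_of_nonneg_left _ hr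
          rw [Real.exp_le_one_iff]
          exact div_nonpos_of_nonpos_of_nonneg (neg_nonpos.mpr (by positivity)) h2σ.le
      _ ≤ Real.sqrt (2 * σ) := by linarith
  · have hrpos : 0 < r := hs.trans hgt
    have hexp : Real.exp (-r ^ 2 / (2 * σ)) ≤ (2 * σ) / r ^ 2 := by
      have ha : 0 < r ^ 2 / (2 * σ) := by positivity
      have h1 : r ^ 2 / (2 * σ) ≤ Real.exp (r ^ 2 / (2 * σ)) := by
        linarith [Real.add_one_le_exp (r ^ 2 / (2 * σ))]
      have h3 : Real.exp (-(r ^ 2 / (2 * σ))) ≤ (r ^ 2 / (2 * σ))⁻¹ := by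
        rw [Real.exp_neg]
        exact inv_anti₀ ha h1
      rw [inv_div] at h3
      rw [neg_div]
      exact h3
    calc r * Real.exp (-r ^ 2 / (2 * σ)) ≤ r * ((2 * σ) / r ^ 2) :=
          mul_le_mul_of_nonneg_left hexp hr
      _ = (2 * σ) / r := by field_simp
      _ ≤ (2 * σ) / Real.sqrt (2 * σ) := by
          apply div_le_div_of_nonneg_left h2σ.le hs hgt.le
      _ = Real.sqrt (2 * σ) := by
          rw [Real.div_sqrt]


variable {d : ℕ}

lemma integrable_kernel_mul {t : ℝ} (ht : 0 < t) (ph : EuclideanSpace ℝ (Fin d) → ℝ)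
    (hpos : ∀ h, 0 < ph h) (hcont : Continuous ph) (hint : Integrable ph)
    (z : EuclideanSpace ℝ (Fin d)) :
    Integrable (fun h => gaussKernel d t h z * ph h) := by
  apply Integrable.mono' (hint.const_mul ((2 * Real.pi * (1 - Real.exp (-t))) ^ (-(d : ℝ) / 2)))
  · exact ((continuous_gaussKernel_fst t z).mul hcont).aestronglyMeasurable
  · filter_upwards with h
    rw [Real.norm_eq_abs, abs_of_pos (mul_pos (gaussKernel_pos ht h z) (hpos h))]
    exact mul_le_mul_of_nonneg_right (gaussKernel_le ht h z) (hpos h).le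

lemma P_pos {t : ℝ} (ht : 0 < t) (ph : EuclideanSpace ℝ (Fin d) → ℝ)
    (hpos : ∀ h, 0 < ph h) (hcont : Continuous ph) (hint : Integrable ph)
    (z : EuclideanSpace ℝ (Fin d)) :
    0 < ∫ h, gaussKernel d t h z * ph h := by
  rw [integral_pos_iff_support_of_nonneg
    (fun h => (mul_pos (gaussKernel_pos ht h z) (hpos h)).le)
    (integrable_kernel_mul ht ph hpos hcont hint z)]
  have : Function.support (fun h => gaussKernel d t h z * ph h) = Set.univ := by
    ext h
    simp only [Function.support, Set.mem_setOf_eq, Set.mem_univ, iff_true, ne_eq]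
    exact (mul_pos (gaussKernel_pos ht h z) (hpos h)).ne'
  rw [this]
  exact isOpen_univ.measure_pos volume Set.univ_nonempty

set_option maxHeartbeats 1000000 in
set_option synthInstance.maxHeartbeats 400000 in
lemma hasFDerivAt_P {t : ℝ} (ht : 0 < t) (ph : EuclideanSpace ℝ (Fin d) → ℝ)
    (hpos : ∀ h, 0 < ph h) (hcont : Continuous ph) (hint : Integrable ph)
    (z₀ : EuclideanSpace ℝ (Fin d)) :
    HasFDerivAt (fun z => ∫ h, gaussKernel d t h z * ph h)
      (∫ h, ((gaussKernel d t h z₀ * ph h) / (1 - Real.exp (-t))) •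
        innerSL ℝ (Real.exp (-t/2) • h - z₀)) z₀ := by
  have hσ : 0 < 1 - Real.exp (-t) := sigma_pos ht
  set σ := 1 - Real.exp (-t) with hσdef
  set Cσ := (2 * Real.pi * σ) ^ (-(d : ℝ) / 2) with hCσ
  have hCσpos : 0 < Cσ := Real.rpow_pos_of_pos (by positivity) _
  have hKcont : ∀ z : EuclideanSpace ℝ (Fin d), Continuous (fun h => gaussKernel d t h z) :=
    fun z => continuous_gaussKernel_fst t z
  apply hasFDerivAt_integral_of_dominated_of_fderiv_le
    (F' := fun z h => ((gaussKernel d t h z * ph h) / σ) • innerSL ℝ (Real.exp (-t/2) • h - z))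
    (bound := fun h => (Cσ / σ * Real.sqrt (2 * σ)) * ph h) (s := Metric.ball z₀ 1) (Metric.ball_mem_nhds z₀ one_pos)
  · filter_upwards with z
    exact ((hKcont z).mul hcont).aestronglyMeasurable
  · exact integrable_kernel_mul ht ph hpos hcont hint z₀
  · apply Continuous.aestronglyMeasurable
    apply Continuous.fun_smul
    · exact ((hKcont z₀).mul hcont).div_const σ
    · exact (innerSL ℝ).continuous.comp (by fun_prop)
  · filter_upwards with h z _
    rw [norm_smul (gaussKernel d t h z * ph h / σ)
        ((innerSL ℝ) (Real.exp (-t/2) • h - z)), innerSL_apply_norm, Real.norm_eq_abs,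
      abs_of_pos (div_pos (mul_pos (gaussKernel_pos ht h z) (hpos h)) hσ)]
    have hK : gaussKernel d t h z = Cσ * Real.exp (-‖Real.exp (-t/2) • h - z‖ ^ 2 / (2 * σ)) := rfl
    rw [hK]
    set r := ‖Real.exp (-t/2) • h - z‖ with hr
    have hrb := r_exp_bound hσ r (norm_nonneg _)
    calc Cσ * Real.exp (-r ^ 2 / (2 * σ)) * ph h / σ * r
        = (Cσ / σ * ph h) * (r * Real.exp (-r ^ 2 / (2 * σ))) := by ring
      _ ≤ (Cσ / σ * ph h) * Real.sqrt (2 * σ) := by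
          exact mul_le_mul_of_nonneg_left hrb
            (mul_nonneg (div_nonneg hCσpos.le hσ.le) (hpos h).le)
      _ = (Cσ / σ * Real.sqrt (2 * σ)) * ph h := by ring
  · exact hint.const_mul _
  · filter_upwards with h z _
    have := (hasFDerivAt_gaussKernel ht h z).mul_const (ph h)
    refine this.congr_fderiv ?_
    ext v
    simp only [ContinuousLinearMap.smul_apply, innerSL_apply_apply, smul_eq_mul,
      ContinuousLinearMap.coe_smul', Pi.smul_apply]
    ring

set_option synthInstance.maxHeartbeats 400000 in
lemma hasGradientAt_quad (B : Matrix (Fin D) (Fin d₀) ℝ) (hB : Bᵀ * B = 1)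
    {σ : ℝ} (hσ : 0 < σ) (x : EuclideanSpace ℝ (Fin D)) :
    HasGradientAt (fun y : EuclideanSpace ℝ (Fin D) =>
        -‖y - Matrix.toEuclideanLin (B * Bᵀ) y‖ ^ 2 / (2 * σ))
      (-((1/σ) • (x - Matrix.toEuclideanLin (B * Bᵀ) x))) x := by
  set Q : EuclideanSpace ℝ (Fin D) →L[ℝ] EuclideanSpace ℝ (Fin D) :=
    ContinuousLinearMap.id ℝ _ - LinearMap.toContinuousLinearMap (Matrix.toEuclideanLin (B * Bᵀ)) with hQdef
  have hQ : ∀ y, Q y = y - Matrix.toEuclideanLin (B * Bᵀ) y := by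
    intro y
    simp [hQdef]
  have key : ∀ v, ⟪Q x, Q v⟫ = ⟪Q x, v⟫ := by
    intro v
    rw [hQ v, inner_sub_right, toEL_mul]
    have : ⟪Q x, Matrix.toEuclideanLin B (Matrix.toEuclideanLin Bᵀ v)⟫ = 0 := by
      rw [real_inner_comm, inner_toEL]
      have hz : Matrix.toEuclideanLin Bᵀ (Q x) = 0 := by
        rw [hQ x, map_sub, toEL_mul, LtL B hB]
        simp
      rw [hz, inner_zero_right]
    rw [this, sub_zero]
  have hQf : HasFDerivAt (fun y => Q y) Q x := Q.hasFDerivAt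
  have hinner := HasFDerivAt.inner ℝ hQf hQf
  have heq : (fun y : EuclideanSpace ℝ (Fin D) =>
      -‖y - Matrix.toEuclideanLin (B * Bᵀ) y‖ ^ 2 / (2 * σ))
      = fun y => (-(1:ℝ)/(2*σ)) * ⟪Q y, Q y⟫ := by
    funext y
    rw [real_inner_self_eq_norm_sq, hQ y]
    ring
  have hext : (InnerProductSpace.toDual ℝ (EuclideanSpace ℝ (Fin D))) (-((1/σ) • Q x))
      = (-(1:ℝ)/(2*σ)) • ((fderivInnerCLM ℝ (Q x, Q x)).comp (Q.prod Q)) := by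
    ext v
    rw [InnerProductSpace.toDual_apply_apply, ContinuousLinearMap.smul_apply,
      ContinuousLinearMap.comp_apply, ContinuousLinearMap.prod_apply, fderivInnerCLM_apply]
    have k1 : (inner ℝ (Q x, Q x).1 ((Q v, Q v)).2 : ℝ) = inner ℝ (Q x) v := key v
    have k2 : (inner ℝ ((Q v, Q v)).1 ((Q x, Q x)).2 : ℝ) = inner ℝ (Q x) v := by
      rw [show ((Q v, Q v)).1 = Q v from rfl, show ((Q x, Q x)).2 = Q x from rfl,
        ← key v]
      exact real_inner_comm _ _
    rw [k1, k2, inner_neg_left, real_inner_smul_left, smul_eq_mul]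
    generalize (inner ℝ (Q x) v : ℝ) = a
    field_simp
    ring
  rw [hasGradientAt_iff_hasFDerivAt, heq, ← hQ x, hext]
  exact hinner.const_mul (-(1:ℝ)/(2*σ))

set_option synthInstance.maxHeartbeats 400000 in
lemma hasGradientAt_comp_toEL (B : Matrix (Fin D) (Fin d₀) ℝ) {G : EuclideanSpace ℝ (Fin d₀) → ℝ}
    {g : EuclideanSpace ℝ (Fin d₀)} {x : EuclideanSpace ℝ (Fin D)}
    (hG : HasGradientAt G g (Matrix.toEuclideanLin Bᵀ x)) :
    HasGradientAt (fun y => G (Matrix.toEuclideanLin Bᵀ y)) (Matrix.toEuclideanLin B g) x := by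
  set Ltc : EuclideanSpace ℝ (Fin D) →L[ℝ] EuclideanSpace ℝ (Fin d₀) :=
    LinearMap.toContinuousLinearMap (Matrix.toEuclideanLin Bᵀ) with hLtc
  have hc : ∀ y, Ltc y = Matrix.toEuclideanLin Bᵀ y := fun y => rfl
  have hLt : HasFDerivAt (fun y : EuclideanSpace ℝ (Fin D) => Matrix.toEuclideanLin Bᵀ y) Ltc x :=
    Ltc.hasFDerivAt
  have hcomp := (hG.hasFDerivAt).comp x hLt
  rw [hasGradientAt_iff_hasFDerivAt]
  refine hcomp.congr_fderiv ?_
  ext v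
  simp only [InnerProductSpace.toDual_apply_apply, ContinuousLinearMap.coe_comp', Function.comp_apply]
  rw [inner_toEL, hc]

end Aux

set_option maxHeartbeats 1000000 in
set_option synthInstance.maxHeartbeats 400000 in
/-- Score decomposition for data supported on a low-dimensional linear subspace:
`∇ log p_t(x̄) = B ∇ log p_t^h(Bᵀ x̄) − (1/σ(t)) (I − B Bᵀ) x̄`. -/
theorem score_decomposition
    (D d₀ : ℕ) (B : Matrix (Fin D) (Fin d₀) ℝ) (hB : Bᵀ * B = 1)
    (ph : EuclideanSpace ℝ (Fin d₀) → ℝ)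
    (hpos : ∀ h, 0 < ph h) (hC2 : ContDiff ℝ 2 ph)
    (hdens : (∫ h, ph h) = 1)
    (A₀ A₁ A₂ : ℝ) (hA₀ : 0 < A₀) (hA₁ : 0 < A₁) (hA₂ : 0 < A₂)
    (htail : ∀ h : EuclideanSpace ℝ (Fin d₀), A₀ ≤ ‖h‖ →
      ph h ≤ (2 * Real.pi) ^ (-(d₀ : ℝ) / 2) * A₁ * Real.exp (-A₂ * ‖h‖ ^ 2 / 2))
    (t : ℝ) (ht : 0 < t) (x : EuclideanSpace ℝ (Fin D)) :
    gradient
        (fun y : EuclideanSpace ℝ (Fin D) =>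
          Real.log (∫ h : EuclideanSpace ℝ (Fin d₀),
            gaussKernel D t (Matrix.toEuclideanLin B h) y * ph h)) x
      = Matrix.toEuclideanLin B
          (gradient
            (fun z : EuclideanSpace ℝ (Fin d₀) =>
              Real.log (∫ h : EuclideanSpace ℝ (Fin d₀), gaussKernel d₀ t h z * ph h))
            (Matrix.toEuclideanLin Bᵀ x))
        - (1 / (1 - Real.exp (-t))) • (x - Matrix.toEuclideanLin (B * Bᵀ) x) := by
  have hσ : 0 < 1 - Real.exp (-t) := sigma_pos ht
  have hcont : Continuous ph := hC2.continuous
  have hint : Integrable ph := by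
    by_contra hc
    rw [integral_undef hc] at hdens
    norm_num at hdens
  have hPpos := P_pos ht ph hpos hcont hint
  set G : EuclideanSpace ℝ (Fin d₀) → ℝ :=
    fun z => Real.log (∫ h : EuclideanSpace ℝ (Fin d₀), gaussKernel d₀ t h z * ph h) with hG
  have hGdiff : DifferentiableAt ℝ G (Matrix.toEuclideanLin Bᵀ x) := by
    apply DifferentiableAt.log
    · exact (hasFDerivAt_P ht ph hpos hcont hint _).differentiableAt
    · exact (hPpos _).ne'
  set g := gradient G (Matrix.toEuclideanLin Bᵀ x) with hg
  have hGg : HasGradientAt G g (Matrix.toEuclideanLin Bᵀ x) := hGdiff.hasGradientAt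
  set c : ℝ := (2 * Real.pi * (1 - Real.exp (-t))) ^ (-((D:ℝ) - d₀) / 2) with hc
  have hcpos : 0 < c := Real.rpow_pos_of_pos (by positivity) _
  have hfun : (fun y : EuclideanSpace ℝ (Fin D) =>
      Real.log (∫ h : EuclideanSpace ℝ (Fin d₀),
        gaussKernel D t (Matrix.toEuclideanLin B h) y * ph h))
      = fun y => (Real.log c +
          -‖y - Matrix.toEuclideanLin (B * Bᵀ) y‖ ^ 2 / (2 * (1 - Real.exp (-t))))
        + G (Matrix.toEuclideanLin Bᵀ y) := by
    funext y
    have hker : ∀ h, gaussKernel D t (Matrix.toEuclideanLin B h) y * ph h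
        = (c * Real.exp (-‖y - Matrix.toEuclideanLin (B * Bᵀ) y‖ ^ 2 /
            (2 * (1 - Real.exp (-t)))))
          * (gaussKernel d₀ t h (Matrix.toEuclideanLin Bᵀ y) * ph h) := by
      intro h
      rw [gaussKernel_factor B hB ht h y]
      ring
    simp_rw [hker]
    rw [integral_const_mul, Real.log_mul (by positivity) (hPpos _).ne',
      Real.log_mul hcpos.ne' (Real.exp_pos _).ne', Real.log_exp]
  have hq := hasGradientAt_quad B hB hσ x
  have hq' : HasGradientAt (fun y : EuclideanSpace ℝ (Fin D) => Real.log c +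
      -‖y - Matrix.toEuclideanLin (B * Bᵀ) y‖ ^ 2 / (2 * (1 - Real.exp (-t))))
      (-((1 / (1 - Real.exp (-t))) • (x - Matrix.toEuclideanLin (B * Bᵀ) x))) x := by
    rw [hasGradientAt_iff_hasFDerivAt] at hq ⊢
    simpa using hq.const_add (Real.log c)
  have hcomp := hasGradientAt_comp_toEL B hGg
  have htotal : HasGradientAt (fun y : EuclideanSpace ℝ (Fin D) => (Real.log c +
      -‖y - Matrix.toEuclideanLin (B * Bᵀ) y‖ ^ 2 / (2 * (1 - Real.exp (-t))))
        + G (Matrix.toEuclideanLin Bᵀ y))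
      (Matrix.toEuclideanLin B g -
        (1 / (1 - Real.exp (-t))) • (x - Matrix.toEuclideanLin (B * Bᵀ) x)) x := by
    rw [hasGradientAt_iff_hasFDerivAt] at hq' hcomp ⊢
    have hsum := hq'.add hcomp
    have hvec : Matrix.toEuclideanLin B g -
        (1 / (1 - Real.exp (-t))) • (x - Matrix.toEuclideanLin (B * Bᵀ) x)
        = (-((1 / (1 - Real.exp (-t))) • (x - Matrix.toEuclideanLin (B * Bᵀ) x)))
          + Matrix.toEuclideanLin B g := by
      rw [neg_add_eq_sub]
    rw [hvec, map_add]
    exact hsum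
  rw [hfun]
  exact htotal.gradient
end

section
/- Let d₀ ≥ 1 be an integer, C > 0, and r > 0 with C r² ≥ 2 d₀. Then ∫_{{h ∈ ℝ^{d₀} : ‖h‖₂ > r}} exp(−C‖h‖₂²/2) dh ≤ (2 d₀ π^{d₀/2} / (C Γ(d₀/2 + 1))) · r^{d₀−2} · exp(−C r²/2). -/
open MeasureTheory

lemma aux_exp_tendsto (b : ℝ) (hb : 0 < b) :
    Filter.Tendsto (fun y : ℝ => -(Real.exp (-b * y ^ 2) / (2 * b))) Filter.atTop (nhds 0) := by
  have h1 : Filter.Tendsto (fun y : ℝ => -b * y ^ 2) Filter.atTop Filter.atBot := by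
    exact (Filter.tendsto_const_mul_atBot_of_neg (by linarith : -b < 0)).2
      (Filter.tendsto_pow_atTop two_ne_zero)
  have h2 := Real.tendsto_exp_atBot.comp h1
  have h3 := (h2.div_const (2 * b)).neg
  simpa using h3

lemma aux_hasDeriv (b y : ℝ) (hb : 0 < b) :
    HasDerivAt (fun y : ℝ => -(Real.exp (-b * y ^ 2) / (2 * b)))
      (y * Real.exp (-b * y ^ 2)) y := by
  have h1 : HasDerivAt (fun y : ℝ => -b * y ^ 2) (-b * (2 * y)) y := by
    simpa using ((hasDerivAt_pow 2 y).const_mul (-b))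
  have h2 := h1.exp
  have h3 := (h2.div_const (2 * b)).neg
  refine h3.congr_deriv ?_
  rw [neg_eq_iff_eq_neg, div_eq_iff (by positivity)]
  ring

lemma aux_integrableOn (b a : ℝ) (hb : 0 < b) (ha : 0 < a) :
    IntegrableOn (fun y : ℝ => y * Real.exp (-b * y ^ 2)) (Set.Ioi a) := by
  refine integrableOn_Ioi_deriv_of_nonneg' (g := fun y => -(Real.exp (-b * y ^ 2) / (2 * b)))
    (fun x _ => aux_hasDeriv b x hb) (fun x hx => ?_) (aux_exp_tendsto b hb)
  have hx0 : 0 < x := ha.trans hx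
  positivity

lemma aux_integral (b a : ℝ) (hb : 0 < b) (ha : 0 < a) :
    ∫ y in Set.Ioi a, y * Real.exp (-b * y ^ 2) = Real.exp (-b * a ^ 2) / (2 * b) := by
  rw [integral_Ioi_of_hasDerivAt_of_nonneg' (fun x _ => aux_hasDeriv b x hb)
    (fun x hx => by have : 0 < x := ha.trans hx; positivity) (aux_exp_tendsto b hb)]
  ring

lemma aux_rpow_bound (s C r y : ℝ) (hC : 0 < C) (hr : 0 < r) (hy : r < y)
    (hs2 : 2 * s ≤ C * r ^ 2) :
    y ^ s * Real.exp (-(C/4) * y ^ 2) ≤ r ^ s * Real.exp (-(C/4) * r ^ 2) := by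
  have hy0 : 0 < y := hr.trans hy
  have hmain : y ^ s ≤ r ^ s * Real.exp (C/4 * (y ^ 2 - r ^ 2)) := by
    rcases le_or_gt 0 s with hs | hs
    · have hq : (0:ℝ) < y / r := div_pos hy0 hr
      have hlog : Real.log (y / r) * s ≤ C/4 * (y ^ 2 - r ^ 2) := by
        have h1 : Real.log ((y / r) ^ 2) ≤ (y / r) ^ 2 - 1 :=
          Real.log_le_sub_one_of_pos (by positivity)
        rw [Real.log_pow] at h1
        have hdiv : (y / r) ^ 2 = y ^ 2 / r ^ 2 := by ring
        rw [hdiv] at h1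
        have hr2 : (0:ℝ) < r ^ 2 := by positivity
        have htnn : 0 ≤ y ^ 2 - r ^ 2 := by nlinarith
        have hlog2 : Real.log (y / r) ≤ (y ^ 2 - r ^ 2) / (2 * r ^ 2) := by
          rw [le_div_iff₀ (by positivity)]
          push_cast at h1
          have hy2 : y ^ 2 / r ^ 2 * r ^ 2 = y ^ 2 := div_mul_cancel₀ _ hr2.ne'
          nlinarith [mul_le_mul_of_nonneg_right h1 hr2.le]
        calc Real.log (y / r) * s ≤ ((y ^ 2 - r ^ 2) / (2 * r ^ 2)) * s :=
              mul_le_mul_of_nonneg_right hlog2 hs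
          _ ≤ C/4 * (y ^ 2 - r ^ 2) := by
              rw [div_mul_eq_mul_div, div_le_iff₀ (by positivity)]
              nlinarith
      have heq : y ^ s = r ^ s * (y / r) ^ s := by
        rw [Real.div_rpow hy0.le hr.le]
        field_simp [(Real.rpow_pos_of_pos hr s).ne']
      rw [heq, Real.rpow_def_of_pos hq]
      exact mul_le_mul_of_nonneg_left (Real.exp_le_exp.2 hlog)
        (Real.rpow_pos_of_pos hr s).le
    · have h1 : y ^ s ≤ r ^ s := Real.rpow_le_rpow_of_nonpos hr hy.le hs.le
      have h2 : (1:ℝ) ≤ Real.exp (C/4 * (y ^ 2 - r ^ 2)) := by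
        rw [Real.one_le_exp_iff]
        have h3 : r ^ 2 ≤ y ^ 2 := by nlinarith
        nlinarith
      nlinarith [Real.rpow_pos_of_pos hr s]
  calc y ^ s * Real.exp (-(C/4) * y ^ 2)
      ≤ (r ^ s * Real.exp (C/4 * (y ^ 2 - r ^ 2))) * Real.exp (-(C/4) * y ^ 2) :=
        mul_le_mul_of_nonneg_right hmain (Real.exp_pos _).le
    _ = r ^ s * Real.exp (-(C/4) * r ^ 2) := by
        rw [mul_assoc, ← Real.exp_add]
        ring_nf

lemma aux_pointwise (d₀ : ℕ) (hd₀ : 1 ≤ d₀) (C r y : ℝ) (hC : 0 < C) (hr : 0 < r)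
    (hCr : 2 * (d₀ : ℝ) ≤ C * r ^ 2) (hy : r < y) :
    y ^ (d₀ - 1) * Real.exp (-C * y ^ 2 / 2)
      ≤ (r ^ ((d₀:ℝ) - 2) * Real.exp (-(C/4) * r ^ 2)) * (y * Real.exp (-(C/4) * y ^ 2)) := by
  have hy0 : 0 < y := hr.trans hy
  set s : ℝ := (d₀:ℝ) - 2 with hs_def
  have hkey := aux_rpow_bound s C r y hC hr hy (by rw [hs_def]; push_cast at hCr ⊢; linarith)
  have hpow : y ^ (d₀ - 1) = y * y ^ s := by
    rw [← Real.rpow_natCast y (d₀ - 1), Nat.cast_sub hd₀, Nat.cast_one,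
      show (d₀:ℝ) - 1 = 1 + s by rw [hs_def]; ring, Real.rpow_add hy0, Real.rpow_one]
  have hexp : Real.exp (-C * y ^ 2 / 2)
      = Real.exp (-(C/4) * y ^ 2) * Real.exp (-(C/4) * y ^ 2) := by
    rw [← Real.exp_add]; ring_nf
  calc y ^ (d₀ - 1) * Real.exp (-C * y ^ 2 / 2)
      = (y ^ s * Real.exp (-(C/4) * y ^ 2)) * (y * Real.exp (-(C/4) * y ^ 2)) := by
        rw [hpow, hexp]; ring
    _ ≤ (r ^ s * Real.exp (-(C/4) * r ^ 2)) * (y * Real.exp (-(C/4) * y ^ 2)) :=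
        mul_le_mul_of_nonneg_right hkey (by positivity)

/-- Gaussian tail integral bound: for `C r² ≥ 2 d₀`,
`∫_{‖h‖ > r} exp(−C‖h‖²/2) dh ≤ (2 d₀ π^{d₀/2} / (C Γ(d₀/2 + 1))) r^{d₀−2} exp(−C r²/2)`. -/
theorem gaussian_tail_integral_bound
    (d₀ : ℕ) (hd₀ : 1 ≤ d₀) (C r : ℝ) (hC : 0 < C) (hr : 0 < r)
    (hCr : 2 * (d₀ : ℝ) ≤ C * r ^ 2) :
    (∫ h in {h : EuclideanSpace ℝ (Fin d₀) | r < ‖h‖}, Real.exp (-C * ‖h‖ ^ 2 / 2))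
      ≤ 2 * (d₀ : ℝ) * Real.pi ^ ((d₀ : ℝ) / 2) / (C * Real.Gamma ((d₀ : ℝ) / 2 + 1))
          * r ^ ((d₀ : ℝ) - 2) * Real.exp (-C * r ^ 2 / 2) := by
  haveI : NeZero d₀ := ⟨by omega⟩
  haveI : Nontrivial (EuclideanSpace ℝ (Fin d₀)) := by
    refine ⟨⟨0, EuclideanSpace.single ⟨0, by omega⟩ 1, fun h => ?_⟩⟩
    have := congrArg (fun v : EuclideanSpace ℝ (Fin d₀) => v ⟨0, by omega⟩) h
    simp [EuclideanSpace.single_apply] at this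
  set g : ℝ → ℝ := fun y => Real.exp (-C * y ^ 2 / 2) with hg_def
  set f : ℝ → ℝ := Set.indicator (Set.Ioi r) g with hf_def
  have hsmeas : MeasurableSet {h : EuclideanSpace ℝ (Fin d₀) | r < ‖h‖} :=
    measurableSet_lt measurable_const measurable_norm
  have step1 : (∫ h in {h : EuclideanSpace ℝ (Fin d₀) | r < ‖h‖}, Real.exp (-C * ‖h‖ ^ 2 / 2))
      = ∫ h : EuclideanSpace ℝ (Fin d₀), f ‖h‖ := by
    rw [← integral_indicator hsmeas]
    congr 1
  rw [step1, integral_fun_norm_addHaar volume f, finrank_euclideanSpace_fin,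
    nsmul_eq_mul, smul_eq_mul]
  have hinner : (∫ y in Set.Ioi (0:ℝ), y ^ (d₀ - 1) • f y)
      = ∫ y in Set.Ioi r, y ^ (d₀ - 1) * g y := by
    have hind : ∀ y : ℝ, y ^ (d₀ - 1) • f y
        = Set.indicator (Set.Ioi r) (fun y => y ^ (d₀ - 1) * g y) y := by
      intro y
      by_cases hy : y ∈ Set.Ioi r <;> simp [hf_def, hy]
    simp_rw [hind]
    rw [setIntegral_indicator measurableSet_Ioi, Set.Ioi_inter_Ioi, sup_eq_right.2 hr.le]
  rw [hinner]
  have hΓ : 0 < Real.Gamma ((d₀:ℝ)/2 + 1) := Real.Gamma_pos_of_pos (by positivity)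
  have hvol : (volume (Metric.ball (0 : EuclideanSpace ℝ (Fin d₀)) 1)).toReal
      = Real.pi ^ ((d₀:ℝ)/2) / Real.Gamma ((d₀:ℝ)/2 + 1) := by
    rw [EuclideanSpace.volume_ball]
    simp only [Fintype.card_fin, ENNReal.ofReal_one, one_pow, one_mul]
    rw [ENNReal.toReal_ofReal (by positivity)]
    congr 1
    rw [← Real.rpow_natCast (Real.sqrt Real.pi) d₀, Real.sqrt_eq_rpow,
      ← Real.rpow_mul Real.pi_pos.le]
    ring_nf
  have hK : (∫ y in Set.Ioi r, y ^ (d₀ - 1) * g y)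
      ≤ (r ^ ((d₀:ℝ) - 2) * Real.exp (-(C/4) * r ^ 2))
          * (Real.exp (-(C/4) * r ^ 2) / (2 * (C/4))) := by
    calc (∫ y in Set.Ioi r, y ^ (d₀ - 1) * g y)
        ≤ ∫ y in Set.Ioi r, (r ^ ((d₀:ℝ) - 2) * Real.exp (-(C/4) * r ^ 2))
            * (y * Real.exp (-(C/4) * y ^ 2)) := by
          refine integral_mono_of_nonneg ?_ ((aux_integrableOn (C/4) r (by positivity) hr).const_mul _) ?_
          · filter_upwards [ae_restrict_mem measurableSet_Ioi] with y hy
            have : 0 < y := hr.trans hy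
            simp only [hg_def]
            positivity
          · filter_upwards [ae_restrict_mem measurableSet_Ioi] with y hy
            exact aux_pointwise d₀ hd₀ C r y hC hr hCr hy
      _ = (r ^ ((d₀:ℝ) - 2) * Real.exp (-(C/4) * r ^ 2))
            * ∫ y in Set.Ioi r, y * Real.exp (-(C/4) * y ^ 2) := integral_const_mul _ _
      _ = _ := by rw [aux_integral (C/4) r (by positivity) hr]
  calc (d₀:ℝ) * ((volume (Metric.ball (0 : EuclideanSpace ℝ (Fin d₀)) 1)).toReal
          * ∫ y in Set.Ioi r, y ^ (d₀ - 1) * g y)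
      ≤ (d₀:ℝ) * ((volume (Metric.ball (0 : EuclideanSpace ℝ (Fin d₀)) 1)).toReal
          * ((r ^ ((d₀:ℝ) - 2) * Real.exp (-(C/4) * r ^ 2))
            * (Real.exp (-(C/4) * r ^ 2) / (2 * (C/4))))) := by
        refine mul_le_mul_of_nonneg_left (mul_le_mul_of_nonneg_left hK ENNReal.toReal_nonneg) ?_
        positivity
    _ = 2 * (d₀ : ℝ) * Real.pi ^ ((d₀ : ℝ) / 2) / (C * Real.Gamma ((d₀ : ℝ) / 2 + 1))
          * r ^ ((d₀ : ℝ) - 2) * Real.exp (-C * r ^ 2 / 2) := by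
        have hee : Real.exp (-(C/4) * r ^ 2) * Real.exp (-(C/4) * r ^ 2)
            = Real.exp (-C * r ^ 2 / 2) := by rw [← Real.exp_add]; ring_nf
        rw [hvol, ← hee]
        field_simp
        ring
end

section
/- Let m ≥ 1 be an integer and δ := 1/m. Define ζ : ℝ → ℝ by ζ(t) = −t if 0 ≤ t < δ and ζ(t) = 0 otherwise, and for k = 0, 1, …, m−1 define φ_k : ℝ → ℝ by φ_k(x) = x + ζ(x − kδ). Then the composition φ_{m−1} ∘ φ_{m−2} ∘ ⋯ ∘ φ_0 satisfies: (φ_{m−1} ∘ ⋯ ∘ φ_0)(x) = δ·⌊x/δ⌋ for every x ∈ [0,1), and (φ_{m−1} ∘ ⋯ ∘ φ_0)(x) = x for every x with x < 0 or x ≥ 1. -/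
/-- The piecewise-linear activation `ζ` used in the quantization feed-forward layers. -/
noncomputable def quantZeta (δ t : ℝ) : ℝ := if 0 ≤ t ∧ t < δ then -t else 0

/-- The `k`-th quantization feed-forward layer `φ_k(x) = x + ζ(x − kδ)`. -/
noncomputable def quantPhi (δ : ℝ) (k : ℕ) (x : ℝ) : ℝ := x + quantZeta δ (x - k * δ)

/-- The composition `φ_{m−1} ∘ ⋯ ∘ φ_0`. -/
noncomputable def quantize (δ : ℝ) (m : ℕ) (x : ℝ) : ℝ :=
  (List.range m).foldl (fun y k => quantPhi δ k y) x

lemma quantize_succ (δ : ℝ) (n : ℕ) (x : ℝ) :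
    quantize δ (n+1) x = quantPhi δ n (quantize δ n x) := by
  simp [quantize, List.range_succ]

/-- The stacked feed-forward layers quantize `[0,1)` onto the grid `{0, δ, …, 1−δ}` with
`δ = 1/m`, and act as the identity outside `[0,1)`. -/
theorem quantization_layers_spec (m : ℕ) (hm : 1 ≤ m) :
    (∀ x : ℝ, 0 ≤ x → x < 1 →
        quantize (1 / (m : ℝ)) m x = (1 / (m : ℝ)) * (⌊x / (1 / (m : ℝ))⌋ : ℝ)) ∧
    (∀ x : ℝ, (x < 0 ∨ 1 ≤ x) → quantize (1 / (m : ℝ)) m x = x) := by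
  have hm0 : (0:ℝ) < m := by exact_mod_cast hm
  set δ : ℝ := 1 / (m : ℝ) with hδdef
  have hδ : 0 < δ := by positivity
  have hmδ : (m:ℝ) * δ = 1 := by rw [hδdef]; field_simp
  constructor
  · intro x hx0 hx1
    have hxδ0 : 0 ≤ x / δ := by positivity
    have hj0 : 0 ≤ ⌊x / δ⌋ := Int.floor_nonneg.mpr hxδ0
    set j : ℕ := (⌊x / δ⌋).toNat with hjdef
    have hjcast : ((j:ℝ)) = ((⌊x/δ⌋ : ℤ) : ℝ) := by
      exact_mod_cast congrArg (Int.cast : ℤ → ℝ) (Int.toNat_of_nonneg hj0)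
    have hjl : (j:ℝ) * δ ≤ x := by
      have h1 : ((⌊x/δ⌋ : ℤ) : ℝ) ≤ x / δ := Int.floor_le _
      rw [hjcast]
      calc ((⌊x/δ⌋ : ℤ) : ℝ) * δ ≤ (x/δ) * δ := by nlinarith
        _ = x := by field_simp
    have hjr : x < ((j:ℝ) + 1) * δ := by
      have h1 : x / δ < (⌊x/δ⌋ : ℝ) + 1 := Int.lt_floor_add_one _
      have h2 : x / δ < (j:ℝ) + 1 := by rw [hjcast]; exact h1
      calc x = (x/δ) * δ := by field_simp
        _ < ((j:ℝ) + 1) * δ := by nlinarith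
    have hjm : j < m := by
      have : (j:ℝ) * δ < (m:ℝ) * δ := lt_of_le_of_lt hjl (by rw [hmδ]; exact hx1)
      have : (j:ℝ) < (m:ℝ) := by nlinarith
      exact_mod_cast this
    have key : ∀ n : ℕ, quantize δ n x = if j < n then (j:ℝ) * δ else x := by
      intro n
      induction n with
      | zero => simp [quantize]
      | succ n ih =>
        rw [quantize_succ, ih, quantPhi, quantZeta]
        rcases lt_trichotomy j n with h | h | h
        · have hn : (j:ℝ) < (n:ℝ) := by exact_mod_cast h
          rw [if_pos h, if_pos (Nat.lt_succ_of_lt h), if_neg]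
          · ring
          · rintro ⟨h1, -⟩; nlinarith
        · subst h
          rw [if_neg (lt_irrefl j), if_pos (Nat.lt_succ_self j), if_pos]
          · ring
          · constructor
            · nlinarith
            · nlinarith
        · have hn : (n:ℝ) < (j:ℝ) := by exact_mod_cast h
          have hn1 : (n:ℝ) + 1 ≤ (j:ℝ) := by exact_mod_cast h
          rw [if_neg (Nat.lt_asymm h), if_neg (Nat.not_lt.mpr h), if_neg]
          · ring
          · rintro ⟨-, h2⟩
            have : ((n:ℝ) + 1) * δ ≤ (j:ℝ) * δ := by nlinarith
            nlinarith
    rw [key m, if_pos hjm, hjcast]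
    ring
  · intro x hx
    have key : ∀ n : ℕ, n ≤ m → quantize δ n x = x := by
      intro n hn
      induction n with
      | zero => simp [quantize]
      | succ n ih =>
        rw [quantize_succ, ih (Nat.le_of_succ_le hn), quantPhi, quantZeta, if_neg]
        · ring
        · rintro ⟨h1, h2⟩
          rcases hx with h | h
          · nlinarith [mul_nonneg (Nat.cast_nonneg (α := ℝ) n) hδ.le]
          · have hn1 : (n:ℝ) + 1 ≤ (m:ℝ) := by exact_mod_cast hn
            have : ((n:ℝ) + 1) * δ ≤ (m:ℝ) * δ := by nlinarith
            nlinarith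
    exact key m le_rfl
end

section
/- Let δ ∈ (0,1), d ≥ 1, L ≥ 2, and let g₁ < g₂ < ⋯ < g_L be real numbers. For 1 ≤ j ≤ L define g̃_j := g_j + Σ_{k=1}^{j−1} δ^{−kd}(g_{j−k} − g_{j−k+1}) + δ^{−jd}(g_L − g₁). Then g̃_{j−1} < g̃_j for every 2 ≤ j ≤ L. -/
open BigOperators

/-- The shifted value `g̃_j = g_j + Σ_{k=1}^{j−1} δ^{−kd}(g_{j−k} − g_{j−k+1}) + δ^{−jd}(g_L − g₁)`
produced by the selective shift operations. -/
noncomputable def shiftedVal (δ : ℝ) (d L : ℕ) (g : ℕ → ℝ) (j : ℕ) : ℝ :=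
  g j + (∑ k ∈ Finset.Icc 1 (j - 1), δ ^ (-((k * d : ℕ) : ℤ)) * (g (j - k) - g (j - k + 1)))
    + δ ^ (-((j * d : ℕ) : ℤ)) * (g L - g 1)

lemma shift_pow_eq (δ : ℝ) (d k : ℕ) :
    δ ^ (-((k * d : ℕ) : ℤ)) = (δ ^ (-(d : ℤ))) ^ k := by
  rw [← zpow_natCast (δ ^ (-(d : ℤ))) k, ← zpow_mul]
  congr 1
  push_cast
  ring

lemma shift_reindex (a : ℝ) (g : ℕ → ℝ) (m : ℕ) :
    ∑ k ∈ Finset.Icc 1 m, a ^ k * (g (m + 1 - k) - g (m + 1 - k + 1))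
      = ∑ i ∈ Finset.Icc 1 m, a ^ (m + 1 - i) * (g i - g (i + 1)) := by
  refine Finset.sum_nbij' (fun k => m + 1 - k) (fun i => m + 1 - i) ?_ ?_ ?_ ?_ ?_
  · intro x hx; simp only [Finset.mem_Icc] at *; omega
  · intro x hx; simp only [Finset.mem_Icc] at *; omega
  · intro x hx; simp only [Finset.mem_Icc] at *; omega
  · intro x hx; simp only [Finset.mem_Icc] at *; omega
  · intro x hx
    simp only [Finset.mem_Icc] at hx
    have h1 : m + 1 - (m + 1 - x) = x := by omega
    rw [h1]

lemma telescope_sum (g : ℕ → ℝ) (L : ℕ) (hL : 1 ≤ L) :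
    ∑ i ∈ Finset.Icc 1 (L - 1), (g (i + 1) - g i) = g L - g 1 := by
  induction L with
  | zero => omega
  | succ n ih =>
    rcases Nat.eq_or_lt_of_le hL with h | h
    · simp [← h]
    · have hn : 1 ≤ n := by omega
      have : n + 1 - 1 = (n - 1) + 1 := by omega
      rw [this, Finset.sum_Icc_succ_top (by omega), ih hn]
      have : n - 1 + 1 = n := by omega
      rw [this]
      ring

/-- Monotonicity of the shifted values: if `g₁ < g₂ < ⋯ < g_L` then `g̃_{j−1} < g̃_j` for
every `2 ≤ j ≤ L`. -/
theorem shifted_values_strict_mono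
    (d L : ℕ) (hd : 1 ≤ d) (hL : 2 ≤ L) (δ : ℝ) (hδ0 : 0 < δ) (hδ1 : δ < 1)
    (g : ℕ → ℝ) (hmono : ∀ j, 1 ≤ j → j < L → g j < g (j + 1))
    (j : ℕ) (hj2 : 2 ≤ j) (hjL : j ≤ L) :
    shiftedVal δ d L g (j - 1) < shiftedVal δ d L g j := by
  obtain ⟨n, rfl⟩ : ∃ n, j = n + 2 := ⟨j - 2, by omega⟩
  set a : ℝ := δ ^ (-(d : ℤ)) with ha_def
  have hδd0 : (0 : ℝ) < δ ^ d := pow_pos hδ0 d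
  have hδd1 : δ ^ d < 1 := pow_lt_one₀ hδ0.le hδ1 (by omega)
  have ha : 1 < a := by
    rw [ha_def, zpow_neg, zpow_natCast]
    exact one_lt_inv_iff₀.mpr ⟨hδd0, hδd1⟩
  have ha0 : (0 : ℝ) < a := lt_trans one_pos ha
  -- positivity of increments
  have hpos : ∀ i, 1 ≤ i → i ≤ L - 1 → 0 < g (i + 1) - g i := by
    intro i h1 h2
    have := hmono i h1 (by omega)
    linarith
  -- telescoping
  have hS : g L - g 1 = ∑ i ∈ Finset.Icc 1 (L - 1), (g (i + 1) - g i) :=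
    (telescope_sum g L (by omega)).symm
  set S : ℝ := ∑ i ∈ Finset.Icc 1 (L - 1), (g (i + 1) - g i) with hSdef
  -- rewrite shiftedVal in reindexed form
  have hF : ∀ m : ℕ, shiftedVal δ d L g (m + 1) =
      g (m + 1) + (∑ i ∈ Finset.Icc 1 m, a ^ (m + 1 - i) * (g i - g (i + 1)))
        + a ^ (m + 1) * S := by
    intro m
    unfold shiftedVal
    have h1 : m + 1 - 1 = m := by omega
    rw [h1, hS]
    congr 1
    · congr 1
      rw [← shift_reindex]
      refine Finset.sum_congr rfl ?_
      intro k hk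
      rw [shift_pow_eq]
    · rw [shift_pow_eq]
  have h2 : n + 2 - 1 = n + 1 := by omega
  rw [h2, hF n, hF (n + 1)]
  -- split the top of the sum for j = n+2
  rw [Finset.sum_Icc_succ_top (by omega : 1 ≤ n + 1)]
  have hsum2 : ∑ i ∈ Finset.Icc 1 n, a ^ (n + 1 + 1 - i) * (g i - g (i + 1))
      = a * ∑ i ∈ Finset.Icc 1 n, a ^ (n + 1 - i) * (g i - g (i + 1)) := by
    rw [Finset.mul_sum]
    refine Finset.sum_congr rfl ?_
    intro i hi
    simp only [Finset.mem_Icc] at hi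
    have : n + 1 + 1 - i = (n + 1 - i) + 1 := by omega
    rw [this, pow_succ]
    ring
  rw [hsum2]
  set P : ℝ := ∑ i ∈ Finset.Icc 1 n, a ^ (n + 1 - i) * (g i - g (i + 1)) with hPdef
  -- key inequality : g(n+2) - g(n+1) - P < a^(n+1) * S
  have key : g (n + 2) - g (n + 1) - P < a ^ (n + 1) * S := by
    have hstep1 : ∑ i ∈ Finset.Icc 1 (n + 1), a ^ (n + 1) * (g (i + 1) - g i)
        ≤ a ^ (n + 1) * S := by
      rw [hSdef, Finset.mul_sum]
      refine Finset.sum_le_sum_of_subset_of_nonneg ?_ ?_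
      · intro x hx
        simp only [Finset.mem_Icc] at *
        omega
      · intro i hi hi'
        simp only [Finset.mem_Icc] at hi
        exact le_of_lt (mul_pos (pow_pos ha0 _) (hpos i hi.1 hi.2))
    have hsplit : ∑ i ∈ Finset.Icc 1 (n + 1), a ^ (n + 1) * (g (i + 1) - g i)
        = a ^ (n + 1) * (g (n + 2) - g (n + 1))
          + ∑ i ∈ Finset.Icc 1 n, a ^ (n + 1) * (g (i + 1) - g i) := by
      rw [Finset.sum_Icc_succ_top (by omega : 1 ≤ n + 1)]
      ring
    have hP : -P ≤ ∑ i ∈ Finset.Icc 1 n, a ^ (n + 1) * (g (i + 1) - g i) := by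
      rw [hPdef, ← Finset.sum_neg_distrib]
      refine Finset.sum_le_sum ?_
      intro i hi
      simp only [Finset.mem_Icc] at hi
      have hpow : a ^ (n + 1 - i) ≤ a ^ (n + 1) := pow_le_pow_right₀ ha.le (by omega)
      have hgi : 0 < g (i + 1) - g i := hpos i hi.1 (by omega)
      nlinarith
    have hmn : g (n + 2) - g (n + 1) < a ^ (n + 1) * (g (n + 2) - g (n + 1)) := by
      have hg : 0 < g (n + 2) - g (n + 1) := hpos (n + 1) (by omega) (by omega)
      have : 1 < a ^ (n + 1) := one_lt_pow₀ ha (by omega)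
      nlinarith
    linarith
  have hgrow : a ^ (n + 1 + 1) = a * a ^ (n + 1) := by rw [pow_succ]; ring
  have hbig : 0 < (a - 1) * (a ^ (n + 1) * S - (g (n + 2) - g (n + 1) - P)) :=
    mul_pos (by linarith) (by linarith)
  have harith : n + 1 + 1 - (n + 1) = 1 := by omega
  rw [harith, hgrow]
  nlinarith [hbig]
end

section
/- Let d ≥ 1, L ≥ 1 be integers, j ∈ {1,…,L}, δ ∈ (0, 1/2], and set J := L + 3Lδ^{−dL}. Let g ∈ ℝ^d satisfy: for every i, either g_i = j − 1 − J or g_i ∈ [j−1, j−δ], and g_{i₀} = j − 1 − J for at least one index i₀. Then Σ_{i=1}^{d} δ^{1−i} g_i < 0. -/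
open BigOperators

/-- Any column containing an out-of-range entry `j − 1 − J` (with `J = L + 3Lδ^{−dL}`)
receives a negative column ID `Σ_i δ^{1−i} g_i < 0`. -/
theorem out_of_range_column_has_negative_id
    (d L j : ℕ) (hd : 1 ≤ d) (hL : 1 ≤ L) (hj1 : 1 ≤ j) (hjL : j ≤ L)
    (δ : ℝ) (hδ0 : 0 < δ) (hδhalf : δ ≤ 1 / 2)
    (g : Fin d → ℝ)
    (hg : ∀ i, g i = (j : ℝ) - 1 - ((L : ℝ) + 3 * L * δ ^ (-((d * L : ℕ) : ℤ)))
        ∨ ((j : ℝ) - 1 ≤ g i ∧ g i ≤ (j : ℝ) - δ))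
    (hex : ∃ i, g i = (j : ℝ) - 1 - ((L : ℝ) + 3 * L * δ ^ (-((d * L : ℕ) : ℤ)))) :
    ∑ i, δ ^ (-(i.1 : ℤ)) * g i < 0 := by
  obtain ⟨i₀, hi₀⟩ := hex
  have hδ1 : δ < 1 := by linarith
  have hpow : ∀ n : ℕ, δ ^ (-(n:ℤ)) = (δ⁻¹) ^ n := by
    intro n; rw [zpow_neg, zpow_natCast, inv_pow]
  have hxi2 : (2:ℝ) ≤ δ⁻¹ := by
    rw [show (2:ℝ) = (2⁻¹)⁻¹ by norm_num]
    exact inv_anti₀ hδ0 (by linarith)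
  have hxi1 : (1:ℝ) ≤ δ⁻¹ := by linarith
  have hLr : (1:ℝ) ≤ (L:ℝ) := by exact_mod_cast hL
  have hjr : (j:ℝ) ≤ (L:ℝ) := by exact_mod_cast hjL
  set P : ℝ := (δ⁻¹) ^ (d * L) with hP
  have hAP : δ ^ (-((d * L : ℕ) : ℤ)) = P := hpow _
  have hP1 : (1:ℝ) ≤ P := one_le_pow₀ hxi1
  -- per-index positivity and ≥ 1
  have hpos : ∀ i : Fin d, (0:ℝ) < δ ^ (-(i.1:ℤ)) := by
    intro i; rw [hpow]; positivity
  have hge1 : ∀ i : Fin d, (1:ℝ) ≤ δ ^ (-(i.1:ℤ)) := by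
    intro i; rw [hpow]; exact one_le_pow₀ hxi1
  -- bad entry is very negative
  have hbad : g i₀ ≤ -1 - 3 * L * P := by
    rw [hi₀, hAP]; linarith
  have hbadterm : δ ^ (-(i₀.1:ℤ)) * g i₀ ≤ -1 - 3 * L * P := by
    have h1 := hge1 i₀
    have h2 : g i₀ ≤ 0 := by nlinarith
    nlinarith [hpos i₀]
  -- other terms
  have hterm : ∀ i : Fin d, δ ^ (-(i.1:ℤ)) * g i ≤ (L:ℝ) * (δ⁻¹) ^ i.1 := by
    intro i
    rcases hg i with h | ⟨h1, h2⟩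
    · have hgneg : g i ≤ 0 := by rw [h, hAP]; nlinarith
      have : δ ^ (-(i.1:ℤ)) * g i ≤ 0 :=
        mul_nonpos_of_nonneg_of_nonpos (le_of_lt (hpos i)) hgneg
      have h0 : (0:ℝ) ≤ (L:ℝ) * (δ⁻¹) ^ i.1 := by positivity
      linarith
    · have hgle : g i ≤ (L:ℝ) := by linarith
      rw [hpow]
      have := hpos i
      rw [hpow] at this
      nlinarith
  -- split off bad index
  have hsplit : ∑ i, δ ^ (-(i.1:ℤ)) * g i
      = δ ^ (-(i₀.1:ℤ)) * g i₀ + ∑ i ∈ Finset.univ.erase i₀, δ ^ (-(i.1:ℤ)) * g i :=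
    (Finset.add_sum_erase _ _ (Finset.mem_univ i₀)).symm
  -- geometric bound on the rest
  have hrest : ∑ i ∈ Finset.univ.erase i₀, δ ^ (-(i.1:ℤ)) * g i
      ≤ (L:ℝ) * (P - 1) := by
    have h1 : ∑ i ∈ Finset.univ.erase i₀, δ ^ (-(i.1:ℤ)) * g i
        ≤ ∑ i ∈ Finset.univ.erase i₀, (L:ℝ) * (δ⁻¹) ^ i.1 :=
      Finset.sum_le_sum (fun i _ => hterm i)
    have h2 : ∑ i ∈ Finset.univ.erase i₀, (L:ℝ) * (δ⁻¹) ^ i.1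
        ≤ ∑ i : Fin d, (L:ℝ) * (δ⁻¹) ^ i.1 := by
      apply Finset.sum_le_sum_of_subset_of_nonneg (Finset.erase_subset _ _)
      intro i _ _; positivity
    have h3 : ∑ i : Fin d, (L:ℝ) * (δ⁻¹) ^ i.1
        = (L:ℝ) * ∑ k ∈ Finset.range d, (δ⁻¹) ^ k := by
      rw [← Finset.mul_sum, Fin.sum_univ_eq_sum_range]
    have hgeom : ∑ k ∈ Finset.range d, (δ⁻¹) ^ k ≤ (δ⁻¹) ^ d - 1 := by
      have hne : δ⁻¹ ≠ 1 := by linarith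
      rw [geom_sum_eq hne]
      have hd1 : (1:ℝ) ≤ δ⁻¹ - 1 := by linarith
      have hnum : (0:ℝ) ≤ (δ⁻¹) ^ d - 1 := by
        have := one_le_pow₀ hxi1 (n := d)
        linarith
      exact div_le_self hnum hd1
    have hdP : (δ⁻¹) ^ d ≤ P := by
      apply pow_le_pow_right₀ hxi1
      exact Nat.le_mul_of_pos_right d hL
    calc ∑ i ∈ Finset.univ.erase i₀, δ ^ (-(i.1:ℤ)) * g i
        ≤ ∑ i : Fin d, (L:ℝ) * (δ⁻¹) ^ i.1 := le_trans h1 h2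
      _ = (L:ℝ) * ∑ k ∈ Finset.range d, (δ⁻¹) ^ k := h3
      _ ≤ (L:ℝ) * ((δ⁻¹) ^ d - 1) := by
          apply mul_le_mul_of_nonneg_left hgeom (by positivity)
      _ ≤ (L:ℝ) * (P - 1) := by nlinarith
  rw [hsplit]
  nlinarith
end

section
/- Let a₂, a₃, b₁, b₂, b₃, c₁, c₂ ∈ ℝ with c₁ < c₂, and let ζ : ℝ → ℝ be given by ζ(x) = b₁ for x < c₁, ζ(x) = a₂x + b₂ for c₁ ≤ x < c₂, and ζ(x) = a₃x + b₃ for x ≥ c₂. For ε ∈ (0, c₂ − c₁) define ζ̃(x) := b₁ + ((a₂c₁ + b₂ − b₁)/ε)·ReLU(x − c₁ + ε) + (a₂ − (a₂c₁ + b₂ − b₁)/ε)·ReLU(x − c₁) + ((a₃c₂ + b₃ − a₂(c₂ − ε) − b₂)/ε − a₂)·ReLU(x − c₂ + ε) + (a₃ − (a₃c₂ + b₃ − a₂(c₂ − ε) − b₂)/ε)·ReLU(x − c₂). Then ζ̃(x) = ζ(x) for every x ∉ [c₁ − ε, c₁) ∪ [c₂ − ε, c₂). -/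
/-- The explicit combination of four ReLUs agrees with the three-piece piecewise-linear
activation `ζ` outside the two length-`ε` intervals preceding the breakpoints. -/
theorem four_relu_approximation
    (a₂ a₃ b₁ b₂ b₃ c₁ c₂ ε : ℝ) (hc : c₁ < c₂) (hε0 : 0 < ε) (hε : ε < c₂ - c₁)
    (x : ℝ)
    (hx : ¬ ((c₁ - ε ≤ x ∧ x < c₁) ∨ (c₂ - ε ≤ x ∧ x < c₂))) :
    b₁ + ((a₂ * c₁ + b₂ - b₁) / ε) * max (x - c₁ + ε) 0
      + (a₂ - (a₂ * c₁ + b₂ - b₁) / ε) * max (x - c₁) 0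
      + ((a₃ * c₂ + b₃ - a₂ * (c₂ - ε) - b₂) / ε - a₂) * max (x - c₂ + ε) 0
      + (a₃ - (a₃ * c₂ + b₃ - a₂ * (c₂ - ε) - b₂) / ε) * max (x - c₂) 0
    = if x < c₁ then b₁ else if x < c₂ then a₂ * x + b₂ else a₃ * x + b₃ := by
  push_neg at hx
  obtain ⟨hx1, hx2⟩ := hx
  have hεne : ε ≠ 0 := ne_of_gt hε0
  rcases lt_or_ge x (c₁ - ε) with h1 | h1
  · -- x < c₁ - ε : all maxes are 0
    rw [max_eq_right (by linarith), max_eq_right (by linarith),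
        max_eq_right (by linarith), max_eq_right (by linarith),
        if_pos (by linarith)]
    ring
  · have hc1 : c₁ ≤ x := hx1 h1
    rcases lt_or_ge x (c₂ - ε) with h2 | h2
    · -- c₁ ≤ x < c₂ - ε
      rw [max_eq_left (by linarith), max_eq_left (by linarith),
          max_eq_right (by linarith), max_eq_right (by linarith),
          if_neg (by linarith), if_pos (by linarith)]
      field_simp
      ring
    · have hc2 : c₂ ≤ x := hx2 h2
      rw [max_eq_left (by linarith), max_eq_left (by linarith),
          max_eq_left (by linarith), max_eq_left (by linarith),
          if_neg (by linarith), if_neg (by linarith)]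
      field_simp
      ring
end

section
/- Let L, k₁, k₂ ≥ 1, ε₁, ε₂ ≥ 0, and let F, Q ∈ ℝ^{L×L}, U₁, V₁ ∈ ℝ^{L×k₁}, U₂, V₂ ∈ ℝ^{L×k₂} satisfy ‖U₁V₁ᵀ − F‖_max ≤ ε₁ and ‖U₂V₂ᵀ − Q‖_max ≤ ε₂. Let U₃ := U₁ • U₂ and V₃ := V₁ • V₂ be the row-wise Kronecker products (so U₃, V₃ ∈ ℝ^{L×k₁k₂}). Then ‖U₃V₃ᵀ − F ⊙ Q‖_max ≤ ‖U₁V₁ᵀ‖_max · ε₂ + ε₁ · ‖Q‖_max. -/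
open Matrix BigOperators

/-- Entrywise maximum norm of a matrix: `‖A‖_max = max_{i,j} |A i j|`. -/
noncomputable def maxNorm {m n : ℕ} (A : Matrix (Fin m) (Fin n) ℝ) : ℝ :=
  ⨆ p : Fin m × Fin n, |A p.1 p.2|

/-- Row-wise (face-splitting) Kronecker product. -/
def rowKron {L k₁ k₂ : ℕ} (U : Matrix (Fin L) (Fin k₁) ℝ) (V : Matrix (Fin L) (Fin k₂) ℝ) :
    Matrix (Fin L) (Fin k₁ × Fin k₂) ℝ :=
  Matrix.of fun j p => U j p.1 * V j p.2

lemma abs_entry_le_maxNorm {m n : ℕ} [NeZero m] [NeZero n]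
    (A : Matrix (Fin m) (Fin n) ℝ) (i : Fin m) (j : Fin n) : |A i j| ≤ maxNorm A := by
  unfold maxNorm
  exact le_ciSup (Set.Finite.bddAbove (Set.finite_range fun p : Fin m × Fin n => |A p.1 p.2|)) (i, j)

lemma maxNorm_le {m n : ℕ} (A : Matrix (Fin m) (Fin n) ℝ) (c : ℝ) (hc : 0 ≤ c)
    (h : ∀ i j, |A i j| ≤ c) : maxNorm A ≤ c := by
  unfold maxNorm
  rcases isEmpty_or_nonempty (Fin m × Fin n) with he | hne
  · simpa [Real.iSup_of_isEmpty] using hc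
  · exact ciSup_le fun p => h p.1 p.2

/-- Error bound for the low-rank approximation of a Hadamard product: if `U₁V₁ᵀ ≈ F` and
`U₂V₂ᵀ ≈ Q` entrywise, then `(U₁•U₂)(V₁•V₂)ᵀ ≈ F ⊙ Q` with error
`‖U₁V₁ᵀ‖_max ε₂ + ε₁ ‖Q‖_max`. -/
theorem rowKron_hadamard_approximation
    (L k₁ k₂ : ℕ) (hL : 1 ≤ L) (hk₁ : 1 ≤ k₁) (hk₂ : 1 ≤ k₂)
    (ε₁ ε₂ : ℝ) (hε₁ : 0 ≤ ε₁) (hε₂ : 0 ≤ ε₂)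
    (F Q : Matrix (Fin L) (Fin L) ℝ)
    (U₁ V₁ : Matrix (Fin L) (Fin k₁) ℝ) (U₂ V₂ : Matrix (Fin L) (Fin k₂) ℝ)
    (h₁ : maxNorm (U₁ * V₁ᵀ - F) ≤ ε₁) (h₂ : maxNorm (U₂ * V₂ᵀ - Q) ≤ ε₂) :
    maxNorm (rowKron U₁ U₂ * (rowKron V₁ V₂)ᵀ - Matrix.hadamard F Q)
      ≤ maxNorm (U₁ * V₁ᵀ) * ε₂ + ε₁ * maxNorm Q := by
  haveI : NeZero L := ⟨by omega⟩
  have hA : 0 ≤ maxNorm (U₁ * V₁ᵀ) := le_trans (abs_nonneg _) (abs_entry_le_maxNorm _ 0 0)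
  have hQ : 0 ≤ maxNorm Q := le_trans (abs_nonneg _) (abs_entry_le_maxNorm _ 0 0)
  apply maxNorm_le _ _ (by positivity)
  intro i j
  have key : (rowKron U₁ U₂ * (rowKron V₁ V₂)ᵀ) i j
      = (U₁ * V₁ᵀ) i j * (U₂ * V₂ᵀ) i j := by
    simp only [Matrix.mul_apply, Matrix.transpose_apply, rowKron, Matrix.of_apply,
      Finset.sum_mul_sum, ← Finset.sum_product', Finset.univ_product_univ]
    apply Finset.sum_congr rfl
    intro p _
    ring
  have expand : (rowKron U₁ U₂ * (rowKron V₁ V₂)ᵀ - Matrix.hadamard F Q) i j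
      = (U₁ * V₁ᵀ) i j * ((U₂ * V₂ᵀ) i j - Q i j)
        + ((U₁ * V₁ᵀ) i j - F i j) * Q i j := by
    simp [key, Matrix.hadamard]
    ring
  rw [expand]
  calc |(U₁ * V₁ᵀ) i j * ((U₂ * V₂ᵀ) i j - Q i j) + ((U₁ * V₁ᵀ) i j - F i j) * Q i j|
      ≤ |(U₁ * V₁ᵀ) i j| * |(U₂ * V₂ᵀ) i j - Q i j|
        + |(U₁ * V₁ᵀ) i j - F i j| * |Q i j| := by
        refine le_trans (abs_add_le _ _) ?_
        simp [abs_mul]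
    _ ≤ maxNorm (U₁ * V₁ᵀ) * ε₂ + ε₁ * maxNorm Q := by
        gcongr
        · exact abs_entry_le_maxNorm _ i j
        · exact le_trans (abs_entry_le_maxNorm (U₂ * V₂ᵀ - Q) i j) h₂
        · exact le_trans (abs_entry_le_maxNorm (U₁ * V₁ᵀ - F) i j) h₁
        · exact abs_entry_le_maxNorm _ i j
end

section
/- Let L, k₁, k₂ ≥ 1, ε₁, ε₂ ≥ 0, and let F, Q ∈ ℝ^{L×L}, U₁, V₁ ∈ ℝ^{L×k₁}, U₂, V₂ ∈ ℝ^{L×k₂}. Write F̃ := U₁V₁ᵀ and Q̃ := U₂V₂ᵀ, and assume ‖F̃ − F‖_max ≤ ε₁ and ‖Q̃ − Q‖_max ≤ ε₂. Define r, r̃ ∈ ℝ^L by r_j := ⟨F[j,·], Q[j,·]⟩ and r̃_j := ⟨F̃[j,·], Q̃[j,·]⟩, and let P₂ := diag(r) F ∈ ℝ^{L×L} (so the j-th row of P₂ is r_j F[j,·]). Then the rank-k₁ matrix (diag(r̃) U₁) V₁ᵀ = diag(r̃) F̃ satisfies ‖diag(r̃) F̃ − P₂‖_max ≤ (max_{1≤j≤L}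 |r̃_j|) · ε₁ + L · ( ‖F̃‖_max · ε₂ + ε₁ · ‖Q‖_max ) · ‖F‖_max. -/
open Matrix BigOperators

lemma abs_le_maxNorm' {m n : ℕ} (A : Matrix (Fin m) (Fin n) ℝ) (i : Fin m) (j : Fin n) :
    |A i j| ≤ maxNorm A := by
  rw [maxNorm]
  exact le_ciSup (Set.Finite.bddAbove (Set.finite_range fun p : Fin m × Fin n => |A p.1 p.2|)) (i, j)

/-- Error bound for the low-rank approximation `diag(r̃) F̃ = (diag(r̃) U₁) V₁ᵀ` of the
rank-one-correction part `P₂ = diag(r) F` of the DiT gradient, where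
`r_j = ⟨F[j,·], Q[j,·]⟩` and `r̃_j = ⟨F̃[j,·], Q̃[j,·]⟩` with `F̃ = U₁V₁ᵀ`, `Q̃ = U₂V₂ᵀ`. -/
theorem diag_row_inner_low_rank_approximation
    (L k₁ k₂ : ℕ) (hL : 1 ≤ L) (hk₁ : 1 ≤ k₁) (hk₂ : 1 ≤ k₂)
    (ε₁ ε₂ : ℝ) (hε₁ : 0 ≤ ε₁) (hε₂ : 0 ≤ ε₂)
    (F Q : Matrix (Fin L) (Fin L) ℝ)
    (U₁ V₁ : Matrix (Fin L) (Fin k₁) ℝ) (U₂ V₂ : Matrix (Fin L) (Fin k₂) ℝ)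
    (h₁ : maxNorm (U₁ * V₁ᵀ - F) ≤ ε₁) (h₂ : maxNorm (U₂ * V₂ᵀ - Q) ≤ ε₂) :
    maxNorm
        ((Matrix.diagonal (fun j => ∑ k, (U₁ * V₁ᵀ) j k * (U₂ * V₂ᵀ) j k) * U₁) * V₁ᵀ
          - Matrix.diagonal (fun j => ∑ k, F j k * Q j k) * F)
      ≤ (⨆ j : Fin L, |∑ k, (U₁ * V₁ᵀ) j k * (U₂ * V₂ᵀ) j k|) * ε₁
        + (L : ℝ) * (maxNorm (U₁ * V₁ᵀ) * ε₂ + ε₁ * maxNorm Q) * maxNorm F := by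
  set Ft := U₁ * V₁ᵀ with hFt
  set Qt := U₂ * V₂ᵀ with hQt
  set rt : Fin L → ℝ := fun j => ∑ k, Ft j k * Qt j k with hrt
  set r : Fin L → ℝ := fun j => ∑ k, F j k * Q j k with hr
  set R : ℝ := ⨆ j : Fin L, |rt j| with hR
  have hLpos : 0 < L := hL
  have hne : Nonempty (Fin L) := ⟨⟨0, hLpos⟩⟩
  have hFe : ∀ i j, |Ft i j - F i j| ≤ ε₁ := fun i j => by
    have := (abs_le_maxNorm' (Ft - F) i j).trans h₁
    simpa [Matrix.sub_apply] using this
  have hQe : ∀ i j, |Qt i j - Q i j| ≤ ε₂ := fun i j => by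
    have := (abs_le_maxNorm' (Qt - Q) i j).trans h₂
    simpa [Matrix.sub_apply] using this
  have hRle : ∀ j, |rt j| ≤ R := fun j => by
    rw [hR]
    exact le_ciSup (Set.Finite.bddAbove (Set.finite_range fun j => |rt j|)) j
  have hR0 : 0 ≤ R := (abs_nonneg _).trans (hRle ⟨0, hLpos⟩)
  have hFt0 : 0 ≤ maxNorm Ft := (abs_nonneg _).trans (abs_le_maxNorm' Ft ⟨0, hLpos⟩ ⟨0, hLpos⟩)
  have hF0 : 0 ≤ maxNorm F := (abs_nonneg _).trans (abs_le_maxNorm' F ⟨0, hLpos⟩ ⟨0, hLpos⟩)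
  have hQ0 : 0 ≤ maxNorm Q := (abs_nonneg _).trans (abs_le_maxNorm' Q ⟨0, hLpos⟩ ⟨0, hLpos⟩)
  have hrdiff : ∀ j, |rt j - r j| ≤ (L : ℝ) * (maxNorm Ft * ε₂ + ε₁ * maxNorm Q) := by
    intro j
    have heq : rt j - r j = ∑ k, (Ft j k * (Qt j k - Q j k) + (Ft j k - F j k) * Q j k) := by
      rw [hrt, hr]
      simp only
      rw [← Finset.sum_sub_distrib]
      exact Finset.sum_congr rfl fun k _ => by ring
    rw [heq]
    calc |∑ k, (Ft j k * (Qt j k - Q j k) + (Ft j k - F j k) * Q j k)|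
        ≤ ∑ k, |Ft j k * (Qt j k - Q j k) + (Ft j k - F j k) * Q j k| :=
          Finset.abs_sum_le_sum_abs _ _
      _ ≤ ∑ _k : Fin L, (maxNorm Ft * ε₂ + ε₁ * maxNorm Q) := by
          apply Finset.sum_le_sum
          intro k _
          calc |Ft j k * (Qt j k - Q j k) + (Ft j k - F j k) * Q j k|
              ≤ |Ft j k * (Qt j k - Q j k)| + |(Ft j k - F j k) * Q j k| := abs_add_le _ _
            _ = |Ft j k| * |Qt j k - Q j k| + |Ft j k - F j k| * |Q j k| := by
                rw [abs_mul, abs_mul]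
            _ ≤ maxNorm Ft * ε₂ + ε₁ * maxNorm Q := by
                gcongr
                · exact abs_le_maxNorm' Ft j k
                · exact hQe j k
                · exact hFe j k
                · exact abs_le_maxNorm' Q j k
      _ = (L : ℝ) * (maxNorm Ft * ε₂ + ε₁ * maxNorm Q) := by
          rw [Finset.sum_const, Finset.card_univ, Fintype.card_fin, nsmul_eq_mul]
  apply ciSup_le
  rintro ⟨j, i⟩
  have hentry : ((Matrix.diagonal rt * U₁) * V₁ᵀ - Matrix.diagonal r * F) j i
      = rt j * Ft j i - r j * F j i := by
    rw [Matrix.sub_apply, Matrix.mul_assoc, ← hFt, Matrix.diagonal_mul, Matrix.diagonal_mul]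
  simp only
  rw [hentry]
  have hsplit : rt j * Ft j i - r j * F j i
      = rt j * (Ft j i - F j i) + (rt j - r j) * F j i := by ring
  rw [hsplit]
  calc |rt j * (Ft j i - F j i) + (rt j - r j) * F j i|
      ≤ |rt j * (Ft j i - F j i)| + |(rt j - r j) * F j i| := abs_add_le _ _
    _ = |rt j| * |Ft j i - F j i| + |rt j - r j| * |F j i| := by rw [abs_mul, abs_mul]
    _ ≤ R * ε₁ + (L : ℝ) * (maxNorm Ft * ε₂ + ε₁ * maxNorm Q) * maxNorm F := by
        gcongr
        · exact hRle j
        · exact hFe j i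
        · exact hrdiff j
        · exact abs_le_maxNorm' F j i
end
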